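/- Let m0 > 0, m1 > 0 and τ > 0 be real numbers, and set c = √(m0 m1 / (1 + τ²)). Then arctan((m1 − c)/(τ c)) + arctan((m0 − c)/(τ c)) = arctan τ. -/

import Mathlib

theorem travelling_dirac_arctan_identity
    (m0 m1 τ : ℝ) (hm0 : 0 < m0) (hm1 : 0 < m1) (hτ : 0 < τ)
    (c : ℝ) (hc : c = Real.sqrt (m0 * m1 / (1 + τ ^ 2))) :
    Real.arctan ((m1 - c) / (τ * c)) + Real.arctan ((m0 - c) / (τ * c))
      = Real.arctan τ := by
  have hden : (0:ℝ) < 1 + τ ^ 2 := by positivity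
  have hcpos : 0 < c := by
    rw [hc]; exact Real.sqrt_pos.mpr (by positivity)
  have hc2 : c ^ 2 = m0 * m1 / (1 + τ ^ 2) := by
    rw [hc, Real.sq_sqrt (by positivity)]
  have hm : m0 * m1 = c ^ 2 * (1 + τ ^ 2) := by
    field_simp at hc2; linarith
  -- 2c < m0 + m1
  have hclt : 2 * c < m0 + m1 := by
    nlinarith [sq_nonneg (m0 - m1), mul_pos (mul_pos hτ hτ) (mul_pos hcpos hcpos),
      hcpos, hm0, hm1]
  have hτc : 0 < τ * c := mul_pos hτ hcpos
  have hab : ((m1 - c) / (τ * c)) * ((m0 - c) / (τ * c)) < 1 := by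
    rw [div_mul_div_comm, div_lt_one (by positivity)]
    nlinarith [mul_pos hτc hcpos]
  rw [Real.arctan_add hab]
  congr 1
  have h1 : 1 - (m1 - c) / (τ * c) * ((m0 - c) / (τ * c)) =
      (m0 + m1 - 2 * c) / (τ ^ 2 * c) := by
    field_simp
    nlinarith [hm]
  have hne : m0 + m1 - 2 * c ≠ 0 := by linarith
  rw [h1, ← add_div]
  rw [div_div_div_eq]
  field_simp
  rw [div_eq_one_iff_eq (by linarith)]
  ring
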